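/- Let T : L∞[0,1] ≃ ℓ∞ be a continuous linear equivalence with ‖Tg‖ ≥ ‖g‖ for every g, let φ_n = T⁻¹(e_n), and let r = sup{‖∑_{i∈I} σ(i)·φ_i‖ : I ⊆ ℕ finite, σ : I → ({−1,1} : Set ℝ)}. Let ε > 0, let I ⊆ ℕ be finite, σ : I → {−1,1}, set φ = ∑_{i∈I} σ(i)·φ_i, and let B ⊆ [0,1] be a measurable set such that φ(x) > r − ε for almost every x ∈ B. Then for almost every x ∈ B, ∑_{n ∉ I} |φ_n(x)| ≤ ε (with measurable representatives of the φ_n). -/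

import Mathlib

open MeasureTheory ENNReal

/-- Lebesgue measure restricted to the unit interval `[0,1]`. -/
noncomputable def μ01 : Measure ℝ := volume.restrict (Set.Icc (0 : ℝ) 1)

private lemma coeFn_sum_smul_ae {ι : Type*} (c : ι → ℝ) (f : ι → Lp ℝ ∞ μ01) (s : Finset ι) :
    ⇑(∑ i ∈ s, c i • f i) =ᵐ[μ01] fun x => ∑ i ∈ s, c i * (f i : ℝ → ℝ) x := by
  classical
  induction s using Finset.cons_induction with
  | empty => simp only [Finset.sum_empty]; exact Lp.coeFn_zero (E := ℝ) (p := ∞) (μ := μ01)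
  | cons a s ha ih =>
    rw [Finset.sum_cons]
    filter_upwards [Lp.coeFn_add (c a • f a) (∑ i ∈ s, c i • f i), ih,
      Lp.coeFn_smul (c a) (f a)] with x h1 h2 h3
    simp only [Finset.sum_cons, h1, Pi.add_apply, h2, h3, Pi.smul_apply, smul_eq_mul]

private lemma ae_abs_le_norm (f : Lp ℝ ∞ μ01) : ∀ᵐ x ∂μ01, |(f : ℝ → ℝ) x| ≤ ‖f‖ := by
  filter_upwards [ae_le_eLpNormEssSup (f := (f : ℝ → ℝ)) (μ := μ01)] with x hx
  have hne : eLpNorm f ∞ μ01 ≠ ∞ := Lp.eLpNorm_ne_top f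
  rw [eLpNorm_exponent_top] at hne
  have := ENNReal.toReal_mono hne hx
  simpa [Lp.norm_def, eLpNorm_exponent_top, Real.norm_eq_abs] using this

/-- If `T : L∞[0,1] ≃ ℓ∞` is norm-increasing, `φ_n = T⁻¹(e_n)`,
`r = sup{‖∑_{i∈I} σ(i)φ_i‖}`, and `φ = ∑_{i∈I} σ(i)φ_i > r − ε` a.e. on a measurable
set `B ⊆ [0,1]`, then `∑_{n∉I} |φ_n(x)| ≤ ε` for almost every `x ∈ B`. -/
theorem ae_tail_small_on_B
    (T : Lp ℝ ∞ μ01 ≃L[ℝ] lp (fun _ : ℕ => ℝ) ∞)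
    (hT : ∀ g : Lp ℝ ∞ μ01, ‖g‖ ≤ ‖T g‖)
    (φ : ℕ → Lp ℝ ∞ μ01) (hφ : ∀ n, φ n = T.symm (lp.single ∞ n 1))
    (r : ℝ)
    (hr : r = sSup {x : ℝ | ∃ (I : Finset ℕ) (σ : ℕ → ℝ),
      (∀ i ∈ I, σ i = 1 ∨ σ i = -1) ∧ x = ‖∑ i ∈ I, σ i • φ i‖})
    (ε : ℝ) (hε : 0 < ε)
    (I : Finset ℕ) (σ : ℕ → ℝ) (hσ : ∀ i ∈ I, σ i = 1 ∨ σ i = -1)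
    (φS : Lp ℝ ∞ μ01) (hφS : φS = ∑ i ∈ I, σ i • φ i)
    (B : Set ℝ) (hB : MeasurableSet B) (hBsub : B ⊆ Set.Icc (0 : ℝ) 1)
    (hφSB : ∀ᵐ x ∂μ01, x ∈ B → r - ε < (φS : ℝ → ℝ) x) :
    ∀ᵐ x ∂μ01, x ∈ B →
      Summable (fun n : {n : ℕ // n ∉ I} => |(φ (n : ℕ) : ℝ → ℝ) x|) ∧
      (∑' n : {n : ℕ // n ∉ I}, |(φ (n : ℕ) : ℝ → ℝ) x|) ≤ ε := by
  classical
  -- Step 1: every signed sum has norm at most 1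
  have bound1 : ∀ (K : Finset ℕ) (ρ : ℕ → ℝ), (∀ i ∈ K, ρ i = 1 ∨ ρ i = -1) →
      ‖∑ i ∈ K, ρ i • φ i‖ ≤ 1 := by
    intro K ρ hρ
    have heq : ∑ i ∈ K, ρ i • φ i = T.symm (∑ i ∈ K, ρ i • lp.single ∞ i 1) := by
      rw [map_sum]
      exact Finset.sum_congr rfl fun i _ => by rw [hφ, ← _root_.map_smul]
    rw [heq]
    have h1 : ‖T.symm (∑ i ∈ K, ρ i • lp.single ∞ i (1 : ℝ))‖ ≤
        ‖∑ i ∈ K, ρ i • lp.single ∞ i (1 : ℝ)‖ := by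
      have h := hT (T.symm (∑ i ∈ K, ρ i • lp.single ∞ i (1 : ℝ)))
      rwa [T.apply_symm_apply] at h
    refine h1.trans (lp.norm_le_of_forall_le zero_le_one fun j => ?_)
    have hco : (∑ i ∈ K, ρ i • lp.single ∞ i (1 : ℝ) : lp (fun _ : ℕ => ℝ) ∞) j
        = if j ∈ K then ρ j else 0 := by
      rw [lp.coeFn_sum, Finset.sum_apply]
      have : ∀ i ∈ K, (ρ i • lp.single ∞ i (1 : ℝ) : lp (fun _ : ℕ => ℝ) ∞) j
          = if j = i then ρ i else 0 := by
        intro i _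
        rw [lp.coeFn_smul, Pi.smul_apply, smul_eq_mul, lp.single_apply]
        by_cases h : j = i <;> simp [h]
      rw [Finset.sum_congr rfl this, Finset.sum_ite_eq]
    rw [Real.norm_eq_abs, hco]
    by_cases h : j ∈ K
    · rw [if_pos h]
      rcases hρ j h with h' | h' <;> rw [h'] <;> norm_num
    · rw [if_neg h]; norm_num
  -- Step 2: every signed sum has norm at most r
  have boundr : ∀ (K : Finset ℕ) (ρ : ℕ → ℝ), (∀ i ∈ K, ρ i = 1 ∨ ρ i = -1) →
      ‖∑ i ∈ K, ρ i • φ i‖ ≤ r := by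
    intro K ρ hρ
    rw [hr]
    refine le_csSup ⟨1, ?_⟩ ⟨K, ρ, hρ, rfl⟩
    rintro x ⟨K', ρ', hρ', rfl⟩
    exact bound1 K' ρ' hρ'
  -- Step 3: key a.e. statement over all finite sign patterns
  have key : ∀ᵐ x ∂μ01, ∀ J s : Finset ℕ, (∀ j ∈ J, j ∉ I) →
      (φS : ℝ → ℝ) x + ∑ j ∈ J, (if j ∈ s then (1 : ℝ) else -1) * (φ j : ℝ → ℝ) x ≤ r := by
    rw [ae_all_iff]
    intro J
    rw [ae_all_iff]
    intro s
    by_cases hJ : ∀ j ∈ J, j ∉ I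
    · set τ : ℕ → ℝ := fun j => if j ∈ s then 1 else -1 with hτ
      set g : Lp ℝ ∞ μ01 := φS + ∑ j ∈ J, τ j • φ j with hg
      have hdisj : Disjoint I J := Finset.disjoint_left.2 fun a haI haJ => hJ a haJ haI
      set σ' : ℕ → ℝ := fun i => if i ∈ I then σ i else τ i with hσ'
      have hgeq : g = ∑ i ∈ I ∪ J, σ' i • φ i := by
        rw [hg, Finset.sum_union hdisj, hφS]
        congr 1
        · exact Finset.sum_congr rfl fun i hi => by simp [hσ', hi]
        · exact Finset.sum_congr rfl fun i hi => by simp [hσ', hJ i hi]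
      have hgn : ‖g‖ ≤ r := by
        rw [hgeq]
        refine boundr _ _ fun i hi => ?_
        rcases Finset.mem_union.1 hi with h | h
        · simpa [hσ', h] using hσ i h
        · have : i ∉ I := hJ i h
          by_cases hs : i ∈ s <;> simp [hσ', hτ, this, hs]
      filter_upwards [ae_abs_le_norm g, Lp.coeFn_add φS (∑ j ∈ J, τ j • φ j),
        coeFn_sum_smul_ae τ φ J] with x h1 h2 h3
      intro _
      have heq2 : (g : ℝ → ℝ) x
          = (φS : ℝ → ℝ) x + ∑ j ∈ J, (if j ∈ s then (1 : ℝ) else -1) * (φ j : ℝ → ℝ) x := by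
        rw [hg, h2, Pi.add_apply, h3]
      rw [← heq2]
      exact le_trans (le_abs_self _) (h1.trans hgn)
    · exact Filter.Eventually.of_forall fun x h => absurd h hJ
  -- Step 4: combine
  filter_upwards [key, hφSB] with x hx hxB hxBmem
  have hφSx := hxB hxBmem
  have tail : ∀ J : Finset ℕ, (∀ j ∈ J, j ∉ I) → ∑ j ∈ J, |(φ j : ℝ → ℝ) x| ≤ ε := by
    intro J hJ
    set s : Finset ℕ := J.filter (fun j => 0 ≤ (φ j : ℝ → ℝ) x) with hs
    have h := hx J s hJ
    have habs : ∑ j ∈ J, (if j ∈ s then (1 : ℝ) else -1) * (φ j : ℝ → ℝ) x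
        = ∑ j ∈ J, |(φ j : ℝ → ℝ) x| := by
      refine Finset.sum_congr rfl fun j hj => ?_
      by_cases hp : 0 ≤ (φ j : ℝ → ℝ) x
      · rw [if_pos (Finset.mem_filter.2 ⟨hj, hp⟩), one_mul, abs_of_nonneg hp]
      · have : j ∉ s := fun hc => hp (Finset.mem_filter.1 hc).2
        rw [if_neg this, abs_of_neg (lt_of_not_ge hp)]; ring
    rw [habs] at h
    linarith
  have hsum : ∀ u : Finset {n : ℕ // n ∉ I}, ∑ n ∈ u, |(φ (n : ℕ) : ℝ → ℝ) x| ≤ ε := by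
    intro u
    have h := tail (u.map (Function.Embedding.subtype _)) (fun j hj => by
      obtain ⟨⟨j', hj'⟩, _, rfl⟩ := Finset.mem_map.1 hj; exact hj')
    rw [Finset.sum_map] at h
    simpa using h
  have hS : Summable (fun n : {n : ℕ // n ∉ I} => |(φ (n : ℕ) : ℝ → ℝ) x|) :=
    summable_of_sum_le (c := ε) (fun n => abs_nonneg _) hsum
  exact ⟨hS, hS.tsum_le_of_sum_le hsum⟩
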